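/- Let P(x) be a monic polynomial of degree m over C and c ∈ C a nonzero constant. If Q(x) is a polynomial whose square divides P(x)^2 + c, then ∏ over distinct multiple roots x_i of P(x)^2 + c of (x - x_i)^{m_i - 1} divides P'(x), where m_i is the multiplicity of x_i; in particular the sum ∑ (m_i - 1) over all distinct roots of P(x)^2 + c is at most m - 1. -/

import Mathlib

open Polynomial

/-- If P is monic of degree m over ℂ, c ≠ 0, and P^2 + c = ∏ (x - x_i)^{m_i} with
distinct roots x_i of multiplicities m_i, then ∏ (x - x_i)^{m_i - 1} divides P',
and in particular ∑ (m_i - 1) ≤ m - 1. -/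
theorem stmt3 (m k : ℕ) (hm : 1 ≤ m) (P : Polynomial ℂ) (hP : P.Monic)
    (hdeg : P.natDegree = m) (c : ℂ) (hc : c ≠ 0) (x : Fin k → ℂ) (mi : Fin k → ℕ)
    (hx : Function.Injective x) (hmi : ∀ i, 1 ≤ mi i)
    (hfac : P ^ 2 + C c = ∏ i, (X - C (x i)) ^ mi i) :
    (∏ i, (X - C (x i)) ^ (mi i - 1)) ∣ derivative P ∧ ∑ i, (mi i - 1) ≤ m - 1 := by
  set D : Polynomial ℂ := ∏ i, (X - C (x i)) ^ (mi i - 1) with hD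
  -- each factor divides derivative of the product
  have hdvd_each : ∀ j : Fin k, (X - C (x j)) ^ (mi j - 1) ∣
      derivative (∏ i, (X - C (x i)) ^ mi i) := by
    intro j
    rw [← Finset.mul_prod_erase _ _ (Finset.mem_univ j), derivative_mul]
    apply dvd_add
    · apply Dvd.dvd.mul_right
      rw [derivative_X_sub_C_pow]
      exact Dvd.dvd.mul_left dvd_rfl _
    · apply Dvd.dvd.mul_right
      exact pow_dvd_pow _ (Nat.sub_le _ _)
  -- pairwise coprime
  have hcop : Pairwise (Function.onFun IsCoprime fun i : Fin k => (X - C (x i)) ^ (mi i - 1)) := by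
    intro i j hij
    exact ((pairwise_coprime_X_sub_C hx hij)).pow
  have hDdvd : D ∣ derivative (∏ i, (X - C (x i)) ^ mi i) :=
    Fintype.prod_dvd_of_coprime hcop hdvd_each
  rw [← hfac] at hDdvd
  have hder : derivative (P ^ 2 + C c) = C 2 * P * derivative P := by
    rw [derivative_add, derivative_C, add_zero, derivative_sq]
  rw [hder] at hDdvd
  -- D coprime to P
  have hPne : ∀ j : Fin k, ¬ (X - C (x j)) ∣ P := by
    intro j hdvd
    have hroot : P.eval (x j) = 0 := by
      have := dvd_iff_isRoot.mp hdvd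
      exact this
    have h0 : (P ^ 2 + C c).eval (x j) = c := by simp [hroot]
    have h1 : (∏ i, (X - C (x i)) ^ mi i).eval (x j) = 0 := by
      rw [eval_prod]
      apply Finset.prod_eq_zero (Finset.mem_univ j)
      simp [zero_pow (Nat.one_le_iff_ne_zero.mp (hmi j))]
    rw [hfac, h1] at h0
    exact hc h0.symm
  have hcopDP : IsCoprime D P := by
    apply IsCoprime.prod_left
    intro j _
    apply IsCoprime.pow_left
    exact (Prime.coprime_iff_not_dvd (prime_X_sub_C (x j))).mpr (hPne j)
  have hDP' : D ∣ C 2 * derivative P := by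
    apply hcopDP.dvd_of_dvd_mul_right
    rw [show C 2 * derivative P * P = C 2 * P * derivative P by ring]; exact hDdvd
  have hDP : D ∣ derivative P := by
    have h2 : IsUnit (C (2 : ℂ)) := isUnit_C.mpr (by norm_num)
    exact h2.dvd_mul_left.mp hDP'
  refine ⟨hDP, ?_⟩
  have hP'ne : derivative P ≠ 0 := by
    intro h
    have := natDegree_eq_zero_of_derivative_eq_zero h
    omega
  have hdegD : D.natDegree = ∑ i, (mi i - 1) := by
    rw [hD, natDegree_prod]
    · exact Finset.sum_congr rfl fun i _ => by
        rw [natDegree_pow, natDegree_X_sub_C, mul_one]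
    · intro i _
      exact pow_ne_zero _ (X_sub_C_ne_zero _)
  have hle := natDegree_le_of_dvd hDP hP'ne
  have hdegP' : (derivative P).natDegree ≤ m - 1 := by
    have := natDegree_derivative_le P
    omega
  omega
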